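/- arXiv:2509.17710 — 4 statements merged into one kernel-verified Lean document; each statement's English description precedes it below -/
import Mathlib

section
/- Adjusted Generalized Gronwall Lemma (Proposition 3.1 of the paper, in the pointwise form established by its proof): Let T > 0. Suppose y₁ : [0,T] → ℝ is continuous and nonnegative, y₂ : [0,T] → ℝ is integrable and nonnegative, a : [0,T] → ℝ is integrable and nonnegative, and let A ≥ 0, B > 0, β > 0 be real numbers such that for all T' ∈ [0,T] one has y₁(T') + ∫₀^{T'} y₂(t) dt ≤ A + ∫₀^{T'} a(t)·y₁(t) dt + B·(sup_{t∈[0,T']} y₁(t))^β·∫₀^{T'} y₁(t) dt. Set E := exp(∫₀^T a(t) dt) and suppose there exists δ > 1 such that δ·A·E < ((δ−1)/(δ·B·T·E))^{1/β}. Then for every T' ∈ [0,T] one has y₁(T') + ∫₀^{T'} y₂(t) dt ≤ δ·A·E. -/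
open MeasureTheory intervalIntegral Set Filter Topology


lemma ae_hasDerivAt_primitive (f : ℝ → ℝ) (hm : Measurable f) (hnn : ∀ x, 0 ≤ f x)
    (hi : Integrable f volume) :
    ∀ᵐ x, HasDerivAt (fun t => ∫ s in (0:ℝ)..t, f s) (f x) x := by
  set F : ℝ → ℝ := fun t => ∫ s in (0:ℝ)..t, f s with hF
  have hii : ∀ a b : ℝ, IntervalIntegrable f volume a b := fun a b => hi.intervalIntegrable
  have hFc : Continuous F := intervalIntegral.continuous_primitive hii 0
  have hFm : Monotone F := by
    intro x y hxy
    have h1 : F x + ∫ s in x..y, f s = F y := integral_add_adjacent_intervals (hii 0 x) (hii x y)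
    have h2 : 0 ≤ ∫ s in x..y, f s := intervalIntegral.integral_nonneg hxy (fun u _ => hnn u)
    linarith
  set S : StieltjesFunction ℝ := ⟨F, hFm, fun x => hFc.continuousWithinAt⟩ with hS
  have hSm : S.measure = volume.withDensity (fun x => ENNReal.ofReal (f x)) := by
    refine Measure.ext_of_Ioc _ _ (fun a b hab => ?_)
    rw [S.measure_Ioc, withDensity_apply _ measurableSet_Ioc,
      ← ofReal_integral_eq_lintegral_ofReal hi.integrableOn
        (Filter.Eventually.of_forall fun x => hnn x)]
    congr 1
    have h1 : F a + ∫ s in a..b, f s = F b := integral_add_adjacent_intervals (hii 0 a) (hii a b)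
    have : (S : ℝ → ℝ) = F := rfl
    rw [this]
    rw [intervalIntegral.integral_of_le hab.le] at h1
    linarith
  have hrn : (Measure.rnDeriv S.measure volume) =ᵐ[volume] fun x => ENNReal.ofReal (f x) := by
    rw [hSm]
    exact Measure.rnDeriv_withDensity volume (hm.ennreal_ofReal)
  filter_upwards [S.ae_hasDerivAt, hrn] with x hx h2
  rw [h2] at hx
  simpa [ENNReal.toReal_ofReal (hnn x)] using hx


lemma integral_deriv_le_sub_of_monotone (F h : ℝ → ℝ) (hFm : Monotone F) (hFc : Continuous F)
    (hd : ∀ᵐ x, HasDerivAt F (h x) x) (a b : ℝ) (hab : a ≤ b)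
    (hhi : IntegrableOn h (Ioc a b) volume) :
    ∫ x in a..b, h x ≤ F b - F a := by
  set d : ℕ → ℝ → ℝ := fun n x => ((n:ℝ)+1) * (F (x + ((n:ℝ)+1)⁻¹) - F x) with hdd
  -- pointwise convergence a.e.
  have hconv : ∀ᵐ x, Tendsto (fun n => d n x) atTop (𝓝 (h x)) := by
    filter_upwards [hd] with x hx
    have hslope := hasDerivAt_iff_tendsto_slope.1 hx
    have hu : Tendsto (fun n : ℕ => x + ((n:ℝ)+1)⁻¹) atTop (𝓝[≠] x) := by
      apply tendsto_nhdsWithin_of_tendsto_nhds_of_eventually_within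
      · have : Tendsto (fun n : ℕ => ((n:ℝ)+1)⁻¹) atTop (𝓝 0) := by
          simpa [one_div] using tendsto_one_div_add_atTop_nhds_zero_nat (𝕜 := ℝ)
        simpa using tendsto_const_nhds.add this
      · refine Eventually.of_forall fun n => ?_
        have : (0:ℝ) < ((n:ℝ)+1)⁻¹ := by positivity
        simp only [mem_compl_iff, mem_singleton_iff]
        intro hc
        nlinarith [congrArg (· - x) hc]
    have := hslope.comp hu
    refine this.congr fun n => ?_
    have hpos : (0:ℝ) < ((n:ℝ)+1)⁻¹ := by positivity
    simp only [Function.comp_apply, slope_def_field, hdd]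
    rw [div_eq_iff (by simp; positivity)]
    simp only [add_sub_cancel_left]
    field_simp
  have hnn : ∀ n x, 0 ≤ d n x := by
    intro n x
    have : F x ≤ F (x + ((n:ℝ)+1)⁻¹) := hFm (by nlinarith [inv_pos.2 (by positivity : (0:ℝ) < (n:ℝ)+1)])
    have h1 : (0:ℝ) ≤ (n:ℝ)+1 := by positivity
    have : 0 ≤ F (x + ((n:ℝ)+1)⁻¹) - F x := by linarith
    exact mul_nonneg h1 this
  have hhnn : ∀ᵐ x, 0 ≤ h x := by
    filter_upwards [hconv] with x hx
    exact ge_of_tendsto' hx fun n => hnn n x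
  -- lintegral bound for each n
  have hdint : ∀ n, ∫ x in a..b, d n x ≤ F (b + ((n:ℝ)+1)⁻¹) - F a := by
    intro n
    set c : ℝ := ((n:ℝ)+1)⁻¹ with hc
    have hcpos : (0:ℝ) < c := by positivity
    have hFi : ∀ p q : ℝ, IntervalIntegrable F volume p q := fun p q =>
      hFc.intervalIntegrable p q
    have hFci : ∀ p q : ℝ, IntervalIntegrable (fun x => F (x + c)) volume p q := fun p q =>
      (hFc.comp (continuous_id.add continuous_const)).intervalIntegrable p q
    have e1 : ∫ x in a..b, d n x = ((n:ℝ)+1) * ((∫ x in a..b, F (x + c)) - ∫ x in a..b, F x) := by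
      rw [← intervalIntegral.integral_sub (hFci a b) (hFi a b),
        ← intervalIntegral.integral_const_mul]
    have e2 : (∫ x in a..b, F (x + c)) = ∫ x in (a+c)..(b+c), F x :=
      intervalIntegral.integral_comp_add_right F c
    have e3 : (∫ x in (a+c)..(b+c), F x) - (∫ x in a..b, F x)
        = (∫ x in b..(b+c), F x) - ∫ x in a..(a+c), F x := by
      have h1 : (∫ x in a..(a+c), F x) + ∫ x in (a+c)..(b+c), F x = ∫ x in a..(b+c), F x :=
        integral_add_adjacent_intervals (hFi _ _) (hFi _ _)
      have h2 : (∫ x in a..b, F x) + ∫ x in b..(b+c), F x = ∫ x in a..(b+c), F x :=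
        integral_add_adjacent_intervals (hFi _ _) (hFi _ _)
      linarith
    have h4 : (∫ x in b..(b+c), F x) ≤ c * F (b + c) := by
      have := intervalIntegral.integral_mono_on (by linarith : b ≤ b + c) (hFi _ _)
        (intervalIntegrable_const) (fun x hx => hFm hx.2)
      simpa [mul_comm] using this
    have h5 : c * F a ≤ ∫ x in a..(a+c), F x := by
      have := intervalIntegral.integral_mono_on (by linarith : a ≤ a + c)
        (intervalIntegrable_const) (hFi _ _) (fun x hx => hFm hx.1)
      simpa [mul_comm] using this
    have h6 : ((n:ℝ)+1) * c = 1 := by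
      rw [hc]; field_simp
    calc ∫ x in a..b, d n x = ((n:ℝ)+1) * ((∫ x in (a+c)..(b+c), F x) - ∫ x in a..b, F x) := by
          rw [e1, e2]
      _ = ((n:ℝ)+1) * ((∫ x in b..(b+c), F x) - ∫ x in a..(a+c), F x) := by rw [e3]
      _ ≤ ((n:ℝ)+1) * (c * F (b + c) - c * F a) := by
          have hn1 : (0:ℝ) ≤ (n:ℝ)+1 := by positivity
          apply mul_le_mul_of_nonneg_left _ hn1
          linarith
      _ = F (b + c) - F a := by rw [mul_sub, ← mul_assoc, ← mul_assoc, h6]; ring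
  -- Fatou
  have hdm : ∀ n, Measurable fun x => ENNReal.ofReal (d n x) := by
    intro n
    exact (measurable_const.mul ((hFc.comp (continuous_id.add continuous_const)).measurable.sub
      hFc.measurable)).ennreal_ofReal
  have fatou : ∫⁻ x in Ioc a b, ENNReal.ofReal (h x)
      ≤ atTop.liminf fun n => ∫⁻ x in Ioc a b, ENNReal.ofReal (d n x) := by
    have step : ∫⁻ x in Ioc a b, ENNReal.ofReal (h x)
        ≤ ∫⁻ x in Ioc a b, atTop.liminf fun n => ENNReal.ofReal (d n x) := by
      apply lintegral_mono_ae
      filter_upwards [ae_restrict_of_ae hconv] with x hx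
      have : Tendsto (fun n => ENNReal.ofReal (d n x)) atTop (𝓝 (ENNReal.ofReal (h x))) :=
        (ENNReal.continuous_ofReal.tendsto _).comp hx
      exact this.liminf_eq.symm.le
    exact step.trans (lintegral_liminf_le fun n => hdm n)
  have hbound : ∀ n, ∫⁻ x in Ioc a b, ENNReal.ofReal (d n x)
      ≤ ENNReal.ofReal (F (b + ((n:ℝ)+1)⁻¹) - F a) := by
    intro n
    have hint : IntegrableOn (d n) (Ioc a b) volume := by
      apply Integrable.mono_measure _ (Measure.restrict_mono Ioc_subset_Icc_self le_rfl)
      exact (Continuous.integrableOn_Icc (by continuity))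
    rw [← ofReal_integral_eq_lintegral_ofReal hint
      (Eventually.of_forall fun x => hnn n x)]
    apply ENNReal.ofReal_le_ofReal
    rw [← intervalIntegral.integral_of_le hab]
    exact hdint n
  have hlim : (atTop.liminf fun n => ∫⁻ x in Ioc a b, ENNReal.ofReal (d n x))
      ≤ ENNReal.ofReal (F b - F a) := by
    refine le_trans (liminf_le_liminf (Eventually.of_forall hbound)) ?_
    have : Tendsto (fun n : ℕ => ENNReal.ofReal (F (b + ((n:ℝ)+1)⁻¹) - F a)) atTop
        (𝓝 (ENNReal.ofReal (F b - F a))) := by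
      apply (ENNReal.continuous_ofReal.tendsto _).comp
      have h1 : Tendsto (fun n : ℕ => b + ((n:ℝ)+1)⁻¹) atTop (𝓝 b) := by
        have : Tendsto (fun n : ℕ => ((n:ℝ)+1)⁻¹) atTop (𝓝 0) := by
          simpa [one_div] using tendsto_one_div_add_atTop_nhds_zero_nat (𝕜 := ℝ)
        simpa using tendsto_const_nhds.add this
      exact ((hFc.tendsto b).comp h1).sub_const (F a)
    exact this.liminf_eq.le
  have final : ENNReal.ofReal (∫ x in a..b, h x) ≤ ENNReal.ofReal (F b - F a) := by
    rw [intervalIntegral.integral_of_le hab,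
      ofReal_integral_eq_lintegral_ofReal hhi (ae_restrict_of_ae hhnn)]
    exact fatou.trans hlim
  have hFab : 0 ≤ F b - F a := by have := hFm hab; linarith
  exact (ENNReal.ofReal_le_ofReal_iff hFab).1 final

lemma gronwall_integral_form (T : ℝ) (hT : 0 ≤ T) (u c : ℝ → ℝ) (C : ℝ) (hC : 0 ≤ C)
    (huc : ContinuousOn u (Icc 0 T)) (hunn : ∀ t ∈ Icc (0:ℝ) T, 0 ≤ u t)
    (hci : IntervalIntegrable c volume 0 T) (hcnn : ∀ t ∈ Icc (0:ℝ) T, 0 ≤ c t)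
    (hyp : ∀ t ∈ Icc (0:ℝ) T, u t ≤ C + ∫ s in (0:ℝ)..t, c s * u s) :
    ∀ t ∈ Icc (0:ℝ) T, u t ≤ C * Real.exp (∫ s in (0:ℝ)..t, c s) := by
  -- measurable modification of c, nonnegative, supported on Ioc 0 T
  have hcio : IntegrableOn c (Ioc 0 T) volume := hci.1
  obtain ⟨m, hm_meas, hm_ae⟩ : ∃ m : ℝ → ℝ, Measurable m ∧ c =ᵐ[volume.restrict (Ioc 0 T)] m :=
    ⟨hcio.aestronglyMeasurable.mk c, hcio.aestronglyMeasurable.stronglyMeasurable_mk.measurable,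
      hcio.aestronglyMeasurable.ae_eq_mk⟩
  set cb : ℝ → ℝ := (Ioc (0:ℝ) T).indicator (fun x => max (m x) 0) with hcb
  have hcbm : Measurable cb := (hm_meas.max measurable_const).indicator measurableSet_Ioc
  have hcbnn : ∀ x, 0 ≤ cb x := by
    intro x
    by_cases hx : x ∈ Ioc (0:ℝ) T <;> simp [hcb, indicator, hx, le_max_right]
  have haeq : cb =ᵐ[volume.restrict (Ioc (0:ℝ) T)] c := by
    filter_upwards [hm_ae, ae_restrict_mem measurableSet_Ioc] with x h1 h2
    simp only [hcb, indicator_of_mem h2]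
    rw [← h1, max_eq_left (hcnn x ⟨h2.1.le, h2.2⟩)]
  have hcbi : Integrable cb volume := by
    rw [hcb, integrable_indicator_iff measurableSet_Ioc]
    refine hcio.congr ?_
    filter_upwards [hm_ae, ae_restrict_mem measurableSet_Ioc] with x h1 h2
    rw [← h1, max_eq_left (hcnn x ⟨h2.1.le, h2.2⟩)]
  -- integrals of cb agree with integrals of c
  have hIeq : ∀ g : ℝ → ℝ, ∀ t ∈ Icc (0:ℝ) T,
      (∫ s in (0:ℝ)..t, cb s * g s) = ∫ s in (0:ℝ)..t, c s * g s := by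
    intro g t ht
    rw [intervalIntegral.integral_of_le ht.1, intervalIntegral.integral_of_le ht.1]
    apply MeasureTheory.integral_congr_ae
    have hsub : Ioc (0:ℝ) t ⊆ Ioc 0 T := Ioc_subset_Ioc le_rfl ht.2
    filter_upwards [ae_mono (Measure.restrict_mono hsub le_rfl) haeq] with x hx
    rw [hx]
  have hIeq1 : ∀ t ∈ Icc (0:ℝ) T, (∫ s in (0:ℝ)..t, cb s) = ∫ s in (0:ℝ)..t, c s := by
    intro t ht
    rw [intervalIntegral.integral_of_le ht.1, intervalIntegral.integral_of_le ht.1]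
    apply MeasureTheory.integral_congr_ae
    exact ae_mono (Measure.restrict_mono (Ioc_subset_Ioc le_rfl ht.2) le_rfl) haeq
  -- the primitive A
  set A : ℝ → ℝ := fun t => ∫ s in (0:ℝ)..t, cb s with hA
  have hAii : ∀ p q : ℝ, IntervalIntegrable cb volume p q := fun p q => hcbi.intervalIntegrable
  have hAc : Continuous A := intervalIntegral.continuous_primitive hAii 0
  have hAm : Monotone A := by
    intro x y hxy
    have h1 : A x + ∫ s in x..y, cb s = A y := integral_add_adjacent_intervals (hAii 0 x) (hAii x y)
    have h2 : 0 ≤ ∫ s in x..y, cb s := intervalIntegral.integral_nonneg hxy fun s _ => hcbnn s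
    linarith
  have hAnn : ∀ x, 0 ≤ A x := by
    intro x
    rcases le_total 0 x with hx | hx
    · exact intervalIntegral.integral_nonneg hx fun s _ => hcbnn s
    · have h0 : EqOn cb 0 (uIcc x 0) := by
        intro s hs
        rw [uIcc_of_le hx] at hs
        exact indicator_of_notMem (fun hmem => absurd hmem.1 (not_lt.2 hs.2)) _
      have h1 : (∫ s in x..(0:ℝ), cb s) = 0 := by
        rw [intervalIntegral.integral_congr h0]; simp
      have h2 : A x = -∫ s in x..(0:ℝ), cb s := intervalIntegral.integral_symm x 0
      rw [h2, h1]; simp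
  have hA0 : A 0 = 0 := by simp [hA]
  -- a.e. derivative of A
  have hAd : ∀ᵐ x, HasDerivAt A (cb x) x := ae_hasDerivAt_primitive cb hcbm hcbnn hcbi
  -- key estimate
  have key : ∀ (k : ℕ) (t : ℝ), 0 ≤ t →
      (∫ s in (0:ℝ)..t, cb s * A s ^ k) ≤ A t ^ (k+1) / ((k:ℝ)+1) := by
    intro k t ht
    set Fk : ℝ → ℝ := fun x => A x ^ (k+1) / ((k:ℝ)+1) with hFk
    have hFkm : Monotone Fk := by
      intro x y hxy
      have h1 : (0:ℝ) < (k:ℝ)+1 := by positivity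
      simp only [hFk]
      gcongr
      exacts [hAnn x, hAm hxy]
    have hFkc : Continuous Fk := (hAc.pow _).div_const _
    have hder : ∀ᵐ x, HasDerivAt Fk (cb x * A x ^ k) x := by
      filter_upwards [hAd] with x hx
      have h1 : HasDerivAt (fun y => A y ^ (k+1)) ((↑(k+1)) * A x ^ (k+1-1) * cb x) x := hx.pow (k+1)
      have h2 := h1.div_const ((k:ℝ)+1)
      have h3 : (↑(k+1) : ℝ) * A x ^ (k+1-1) * cb x / ((k:ℝ)+1) = cb x * A x ^ k := by
        have : ((k:ℝ)+1) ≠ 0 := by positivity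
        push_cast
        field_simp
      rwa [h3] at h2
    have hint : IntervalIntegrable (fun s => cb s * A s ^ k) volume 0 t :=
      (hAii 0 t).mul_continuousOn ((hAc.pow k).continuousOn)
    have := integral_deriv_le_sub_of_monotone Fk (fun s => cb s * A s ^ k) hFkm hFkc hder 0 t ht
      hint.1
    simpa [hFk, hA0] using this
  -- uniform bound for u
  obtain ⟨M0, hM0⟩ := isCompact_Icc.exists_bound_of_continuousOn huc
  set M : ℝ := max M0 0 with hMdef
  have hM : ∀ t ∈ Icc (0:ℝ) T, u t ≤ M := fun t ht =>
    (le_abs_self _).trans ((hM0 t ht).trans (le_max_left _ _))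
  have hMnn : 0 ≤ M := le_max_right _ _
  -- induction
  have ind : ∀ n : ℕ, ∀ t ∈ Icc (0:ℝ) T,
      u t ≤ C * ∑ j ∈ Finset.range n, A t ^ j / (j.factorial : ℝ)
        + M * (A t ^ n / (n.factorial : ℝ)) := by
    intro n
    induction n with
    | zero => intro t ht; simpa using hM t ht
    | succ n ih =>
      intro t ht
      have hIccsub : Icc (0:ℝ) t ⊆ Icc 0 T := Icc_subset_Icc le_rfl ht.2
      have huci : IntervalIntegrable (fun s => cb s * u s) volume 0 t :=
        (hAii 0 t).mul_continuousOn (by rw [uIcc_of_le ht.1]; exact huc.mono hIccsub)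
      have hRHScont : Continuous (fun s => C * ∑ j ∈ Finset.range n, A s ^ j / (j.factorial : ℝ)
          + M * (A s ^ n / (n.factorial : ℝ))) := by
        apply Continuous.add
        · exact continuous_const.mul (continuous_finset_sum _ fun j _ => (hAc.pow j).div_const _)
        · exact continuous_const.mul ((hAc.pow n).div_const _)
      have hRHSi : IntervalIntegrable (fun s => cb s *
          (C * ∑ j ∈ Finset.range n, A s ^ j / (j.factorial : ℝ)
            + M * (A s ^ n / (n.factorial : ℝ)))) volume 0 t :=
        (hAii 0 t).mul_continuousOn hRHScont.continuousOn
      have step1 : u t ≤ C + ∫ s in (0:ℝ)..t, cb s *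
          (C * ∑ j ∈ Finset.range n, A s ^ j / (j.factorial : ℝ)
            + M * (A s ^ n / (n.factorial : ℝ))) := by
        refine (hyp t ht).trans ?_
        rw [← hIeq u t ht]
        refine add_le_add_right ?_ C
        refine intervalIntegral.integral_mono_on ht.1 huci hRHSi fun s hs => ?_
        exact mul_le_mul_of_nonneg_left (ih s (hIccsub hs)) (hcbnn s)
      have e : (fun s => cb s * (C * ∑ j ∈ Finset.range n, A s ^ j / (j.factorial : ℝ)
            + M * (A s ^ n / (n.factorial : ℝ))))
          = fun s => (∑ j ∈ Finset.range n, (C / (j.factorial : ℝ)) * (cb s * A s ^ j))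
            + (M / (n.factorial : ℝ)) * (cb s * A s ^ n) := by
        funext s
        rw [mul_add]
        congr 1
        · rw [Finset.mul_sum, Finset.mul_sum]
          refine Finset.sum_congr rfl fun j _ => ?_
          ring
        · ring
      have hsummandi : ∀ j : ℕ, IntervalIntegrable
          (fun s => (C / (j.factorial : ℝ)) * (cb s * A s ^ j)) volume 0 t :=
        fun j => ((hAii 0 t).mul_continuousOn ((hAc.pow j).continuousOn)).const_mul _
      have e2 : (∫ s in (0:ℝ)..t, cb s * (C * ∑ j ∈ Finset.range n, A s ^ j / (j.factorial : ℝ)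
            + M * (A s ^ n / (n.factorial : ℝ))))
          = (∑ j ∈ Finset.range n, (C / (j.factorial : ℝ)) * ∫ s in (0:ℝ)..t, cb s * A s ^ j)
            + (M / (n.factorial : ℝ)) * ∫ s in (0:ℝ)..t, cb s * A s ^ n := by
        have hsumI : IntervalIntegrable
            (fun s => ∑ j ∈ Finset.range n, (C / (j.factorial : ℝ)) * (cb s * A s ^ j))
            volume 0 t := by
          have h0 := IntervalIntegrable.sum (μ := volume) (a := (0:ℝ)) (b := t)
            (Finset.range n) (fun j (_ : j ∈ Finset.range n) => hsummandi j)
          have heq : (∑ j ∈ Finset.range n, fun s => C / (j.factorial : ℝ) * (cb s * A s ^ j))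
              = fun s => ∑ j ∈ Finset.range n, C / (j.factorial : ℝ) * (cb s * A s ^ j) := by
            funext s; simp
          rwa [heq] at h0
        rw [e, intervalIntegral.integral_add hsumI
          (show IntervalIntegrable (fun s => M / (n.factorial : ℝ) * (cb s * A s ^ n)) volume 0 t from
            ((hAii 0 t).mul_continuousOn ((hAc.pow n).continuousOn)).const_mul _),
          intervalIntegral.integral_finset_sum (fun j (_ : j ∈ Finset.range n) => hsummandi j)]
        congr 1
        · exact Finset.sum_congr rfl fun j _ => intervalIntegral.integral_const_mul _ _
        · exact intervalIntegral.integral_const_mul _ _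
      have step2 : (∑ j ∈ Finset.range n, (C / (j.factorial : ℝ)) * ∫ s in (0:ℝ)..t, cb s * A s ^ j)
            + (M / (n.factorial : ℝ)) * ∫ s in (0:ℝ)..t, cb s * A s ^ n
          ≤ (∑ j ∈ Finset.range n, C * (A t ^ (j+1) / ((j+1).factorial : ℝ)))
            + M * (A t ^ (n+1) / ((n+1).factorial : ℝ)) := by
        refine add_le_add ?_ ?_
        · refine Finset.sum_le_sum fun j _ => ?_
          have h1 := mul_le_mul_of_nonneg_left (key j t ht.1)
            (by positivity : (0:ℝ) ≤ C / (j.factorial : ℝ))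
          refine h1.trans_eq ?_
          have hj : ((j.factorial : ℝ)) ≠ 0 := Nat.cast_ne_zero.2 j.factorial_ne_zero
          have hj1 : ((j:ℝ)+1) ≠ 0 := by positivity
          rw [Nat.factorial_succ]
          push_cast
          field_simp
        · have h1 := mul_le_mul_of_nonneg_left (key n t ht.1)
            (by positivity : (0:ℝ) ≤ M / (n.factorial : ℝ))
          refine h1.trans_eq ?_
          have hn : ((n.factorial : ℝ)) ≠ 0 := Nat.cast_ne_zero.2 n.factorial_ne_zero
          have hn1 : ((n:ℝ)+1) ≠ 0 := by positivity
          rw [Nat.factorial_succ]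
          push_cast
          field_simp
      have e3 : C + ((∑ j ∈ Finset.range n, C * (A t ^ (j+1) / ((j+1).factorial : ℝ)))
            + M * (A t ^ (n+1) / ((n+1).factorial : ℝ)))
          = C * ∑ j ∈ Finset.range (n+1), A t ^ j / (j.factorial : ℝ)
            + M * (A t ^ (n+1) / ((n+1).factorial : ℝ)) := by
        rw [Finset.sum_range_succ']
        simp only [Nat.factorial_zero, Nat.cast_one, pow_zero]
        rw [mul_add, Finset.mul_sum]
        ring
      calc u t ≤ C + ∫ s in (0:ℝ)..t, cb s *
            (C * ∑ j ∈ Finset.range n, A s ^ j / (j.factorial : ℝ)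
              + M * (A s ^ n / (n.factorial : ℝ))) := step1
        _ = C + ((∑ j ∈ Finset.range n, (C / (j.factorial : ℝ)) *
              ∫ s in (0:ℝ)..t, cb s * A s ^ j)
            + (M / (n.factorial : ℝ)) * ∫ s in (0:ℝ)..t, cb s * A s ^ n) := by rw [e2]
        _ ≤ C + ((∑ j ∈ Finset.range n, C * (A t ^ (j+1) / ((j+1).factorial : ℝ)))
            + M * (A t ^ (n+1) / ((n+1).factorial : ℝ))) := add_le_add_right step2 C
        _ = _ := e3
  -- pass to the limit
  intro t ht
  have hbd : ∀ n : ℕ, u t ≤ C * Real.exp (A t) + M * (A t ^ n / (n.factorial : ℝ)) := by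
    intro n
    refine (ind n t ht).trans (add_le_add_left ?_ _)
    exact mul_le_mul_of_nonneg_left (Real.sum_le_exp_of_nonneg (hAnn t) n) hC
  have hten : Tendsto (fun n : ℕ => C * Real.exp (A t) + M * (A t ^ n / (n.factorial : ℝ)))
      atTop (𝓝 (C * Real.exp (A t) + M * 0)) :=
    tendsto_const_nhds.add ((FloorSemiring.tendsto_pow_div_factorial_atTop (A t)).const_mul M)
  have hfin : u t ≤ C * Real.exp (A t) := by
    have := ge_of_tendsto' hten hbd
    simpa using this
  rwa [show A t = ∫ s in (0:ℝ)..t, c s from hIeq1 t ht] at hfin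

/-- Adjusted Generalized Gronwall Lemma (Proposition 3.1, pointwise form). -/
theorem adjusted_generalized_gronwall
    (T : ℝ) (hT : 0 < T)
    (y₁ y₂ a : ℝ → ℝ)
    (hy₁c : ContinuousOn y₁ (Icc 0 T))
    (hy₁nn : ∀ t ∈ Icc (0:ℝ) T, 0 ≤ y₁ t)
    (hy₂i : IntervalIntegrable y₂ volume 0 T)
    (hy₂nn : ∀ t ∈ Icc (0:ℝ) T, 0 ≤ y₂ t)
    (hai : IntervalIntegrable a volume 0 T)
    (hann : ∀ t ∈ Icc (0:ℝ) T, 0 ≤ a t)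
    (A B β : ℝ) (hA : 0 ≤ A) (hB : 0 < B) (hβ : 0 < β)
    (hmain : ∀ T' ∈ Icc (0:ℝ) T,
      y₁ T' + ∫ t in (0:ℝ)..T', y₂ t ≤
        A + (∫ t in (0:ℝ)..T', a t * y₁ t)
          + B * (sSup (y₁ '' Icc 0 T')) ^ β * ∫ t in (0:ℝ)..T', y₁ t)
    (E : ℝ) (hE : E = Real.exp (∫ t in (0:ℝ)..T, a t))
    (δ : ℝ) (hδ : 1 < δ)
    (hcond : δ * A * E < ((δ - 1) / (δ * B * T * E)) ^ (1 / β)) :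
    ∀ T' ∈ Icc (0:ℝ) T, y₁ T' + ∫ t in (0:ℝ)..T', y₂ t ≤ δ * A * E := by
  have hEpos : 0 < E := hE ▸ Real.exp_pos _
  have haint : 0 ≤ ∫ t in (0:ℝ)..T, a t := intervalIntegral.integral_nonneg hT.le hann
  have hE1 : 1 ≤ E := hE ▸ Real.one_le_exp haint
  -- the function u
  set u : ℝ → ℝ := fun s => y₁ s + ∫ t in (0:ℝ)..s, y₂ t with hu
  have hy₂int : ∀ s t : ℝ, s ∈ Icc (0:ℝ) T → t ∈ Icc (0:ℝ) T →
      IntervalIntegrable y₂ volume s t := by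
    intro s t hs htt
    refine hy₂i.mono_set ?_
    rw [uIcc_of_le hT.le]
    exact uIcc_subset_Icc hs htt
  have huc : ContinuousOn u (Icc 0 T) := by
    apply hy₁c.add
    have h1 : IntegrableOn y₂ (uIcc (0:ℝ) T) volume := by
      rw [uIcc_of_le hT.le]
      rw [integrableOn_Icc_iff_integrableOn_Ioc]
      exact hy₂i.1
    have := intervalIntegral.continuousOn_primitive_interval (a := (0:ℝ)) (b := T) h1
    rwa [uIcc_of_le hT.le] at this
  have hy₂nonneg : ∀ s ∈ Icc (0:ℝ) T, 0 ≤ ∫ t in (0:ℝ)..s, y₂ t := fun s hs =>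
    intervalIntegral.integral_nonneg hs.1 fun r hr => hy₂nn r ⟨hr.1, hr.2.trans hs.2⟩
  have hunn : ∀ s ∈ Icc (0:ℝ) T, 0 ≤ u s := fun s hs =>
    add_nonneg (hy₁nn s hs) (hy₂nonneg s hs)
  have hy₁u : ∀ s ∈ Icc (0:ℝ) T, y₁ s ≤ u s := fun s hs =>
    le_add_of_nonneg_right (hy₂nonneg s hs)
  -- sSup facts
  have himg : ∀ s ∈ Icc (0:ℝ) T, (y₁ '' Icc 0 s).Nonempty := fun s hs =>
    (nonempty_Icc.2 hs.1).image y₁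
  have hbdd : ∀ s ∈ Icc (0:ℝ) T, BddAbove (y₁ '' Icc 0 s) := fun s hs =>
    (isCompact_Icc.image_of_continuousOn
      (hy₁c.mono (Icc_subset_Icc le_rfl hs.2))).bddAbove
  have hSnn : ∀ s ∈ Icc (0:ℝ) T, 0 ≤ sSup (y₁ '' Icc 0 s) := by
    intro s hs
    have h0 : y₁ 0 ∈ y₁ '' Icc 0 s := mem_image_of_mem y₁ ⟨le_rfl, hs.1⟩
    exact (hy₁nn 0 ⟨le_rfl, hT.le⟩).trans (le_csSup (hbdd s hs) h0)
  have hy₁intmono : ∀ s ∈ Icc (0:ℝ) T, 0 ≤ ∫ t in (0:ℝ)..s, y₁ t := fun s hs =>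
    intervalIntegral.integral_nonneg hs.1 fun r hr => hy₁nn r ⟨hr.1, hr.2.trans hs.2⟩
  have hay₁int : ∀ s ∈ Icc (0:ℝ) T, IntervalIntegrable (fun t => a t * y₁ t) volume 0 s := by
    intro s hs
    refine (hai.mono_set ?_).mul_continuousOn ?_
    · rw [uIcc_of_le hT.le]; exact uIcc_subset_Icc ⟨le_rfl, hT.le⟩ hs
    · rw [uIcc_of_le hs.1]; exact hy₁c.mono (Icc_subset_Icc le_rfl hs.2)
  have hauint : ∀ s ∈ Icc (0:ℝ) T, IntervalIntegrable (fun t => a t * u t) volume 0 s := by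
    intro s hs
    refine (hai.mono_set ?_).mul_continuousOn ?_
    · rw [uIcc_of_le hT.le]; exact uIcc_subset_Icc ⟨le_rfl, hT.le⟩ hs
    · rw [uIcc_of_le hs.1]; exact huc.mono (Icc_subset_Icc le_rfl hs.2)
  rcases eq_or_lt_of_le hA with hA0 | hApos
  · -- case A = 0
    set ST : ℝ := sSup (y₁ '' Icc 0 T) with hST
    have hSTnn : 0 ≤ ST := hSnn T ⟨hT.le, le_rfl⟩
    set c : ℝ → ℝ := fun r => a r + B * ST ^ β with hc
    have hci : IntervalIntegrable c volume 0 T := hai.add intervalIntegrable_const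
    have hcnn : ∀ r ∈ Icc (0:ℝ) T, 0 ≤ c r := fun r hr =>
      add_nonneg (hann r hr) (mul_nonneg hB.le (Real.rpow_nonneg hSTnn β))
    have hyp : ∀ s ∈ Icc (0:ℝ) T, u s ≤ 0 + ∫ r in (0:ℝ)..s, c r * u r := by
      intro s hs
      have h1 := hmain s hs
      rw [← hA0] at h1
      have hSle : sSup (y₁ '' Icc 0 s) ≤ ST :=
        csSup_le_csSup (hbdd T ⟨hT.le, le_rfl⟩) (himg s hs)
          (image_mono (Icc_subset_Icc le_rfl hs.2))
      have h2 : B * (sSup (y₁ '' Icc 0 s)) ^ β * ∫ t in (0:ℝ)..s, y₁ t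
          ≤ B * ST ^ β * ∫ t in (0:ℝ)..s, y₁ t := by
        refine mul_le_mul_of_nonneg_right ?_ (hy₁intmono s hs)
        exact mul_le_mul_of_nonneg_left
          (Real.rpow_le_rpow (hSnn s hs) hSle hβ.le) hB.le
      have h3 : (∫ t in (0:ℝ)..s, a t * y₁ t) + B * ST ^ β * ∫ t in (0:ℝ)..s, y₁ t
          = ∫ t in (0:ℝ)..s, c t * y₁ t := by
        rw [← intervalIntegral.integral_const_mul,
          ← intervalIntegral.integral_add (hay₁int s hs)
            ((hy₁c.mono (Icc_subset_Icc le_rfl hs.2)).intervalIntegrable_of_Icc hs.1 |>.const_mul _)]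
        congr 1
        funext t
        simp [hc]; ring
      have h4 : (∫ t in (0:ℝ)..s, c t * y₁ t) ≤ ∫ t in (0:ℝ)..s, c t * u t := by
        refine intervalIntegral.integral_mono_on hs.1 ?_ ?_ fun t htt => ?_
        · refine (hci.mono_set ?_).mul_continuousOn ?_
          · rw [uIcc_of_le hT.le]; exact uIcc_subset_Icc ⟨le_rfl, hT.le⟩ hs
          · rw [uIcc_of_le hs.1]; exact hy₁c.mono (Icc_subset_Icc le_rfl hs.2)
        · refine (hci.mono_set ?_).mul_continuousOn ?_
          · rw [uIcc_of_le hT.le]; exact uIcc_subset_Icc ⟨le_rfl, hT.le⟩ hs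
          · rw [uIcc_of_le hs.1]; exact huc.mono (Icc_subset_Icc le_rfl hs.2)
        · have htT : t ∈ Icc (0:ℝ) T := ⟨htt.1, htt.2.trans hs.2⟩
          exact mul_le_mul_of_nonneg_left (hy₁u t htT) (hcnn t htT)
      calc u s ≤ 0 + (∫ t in (0:ℝ)..s, a t * y₁ t)
            + B * (sSup (y₁ '' Icc 0 s)) ^ β * ∫ t in (0:ℝ)..s, y₁ t := h1
        _ ≤ 0 + (∫ t in (0:ℝ)..s, a t * y₁ t)
            + B * ST ^ β * ∫ t in (0:ℝ)..s, y₁ t := by linarith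
        _ = 0 + ∫ t in (0:ℝ)..s, c t * y₁ t := by rw [add_assoc, h3]
        _ ≤ 0 + ∫ t in (0:ℝ)..s, c t * u t := by linarith
    have := gronwall_integral_form T hT.le u c 0 le_rfl huc hunn hci hcnn hyp
    intro T' hT'
    have h5 := this T' hT'
    rw [zero_mul] at h5
    calc y₁ T' + ∫ t in (0:ℝ)..T', y₂ t = u T' := rfl
      _ ≤ 0 := h5
      _ ≤ δ * A * E := by rw [← hA0]; ring_nf; exact le_rfl
  · -- case A > 0
    set K : ℝ := δ * A * E with hK
    have hδpos : (0:ℝ) < δ := lt_trans one_pos hδ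
    have hKpos : 0 < K := by positivity
    have hR : (0:ℝ) < (δ - 1) / (δ * B * T * E) := by
      apply div_pos (by linarith) (by positivity)
    have hKβ : K ^ β < (δ - 1) / (δ * B * T * E) := by
      have h1 := Real.rpow_lt_rpow hKpos.le hcond hβ
      have h2 : (((δ - 1) / (δ * B * T * E)) ^ (1/β)) ^ β = (δ - 1) / (δ * B * T * E) := by
        rw [← Real.rpow_mul hR.le, one_div_mul_cancel (ne_of_gt hβ), Real.rpow_one]
      rwa [h2] at h1
    set C' : ℝ := A + B * T * K ^ β * K with hC'
    have hKβnn : 0 ≤ K ^ β := Real.rpow_nonneg hKpos.le β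
    have hC'pos : 0 < C' := by positivity
    have hC'E : C' * E < K := by
      have h2 : K ^ β * (δ * B * T * E) < δ - 1 := by
        rw [← lt_div_iff₀ (by positivity : (0:ℝ) < δ * B * T * E)]
        exact hKβ
      have h3 := mul_lt_mul_of_pos_left h2 (div_pos hKpos hδpos)
      have h4 : K / δ * (K ^ β * (δ * B * T * E)) = B * T * K ^ β * K * E := by
        field_simp
      have h5 : K / δ * (δ - 1) = K - K / δ := by
        field_simp
      have h6 : A * E = K / δ := by
        rw [hK]
        field_simp
      rw [h4, h5] at h3
      calc C' * E = A * E + B * T * K ^ β * K * E := by rw [hC']; ring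
        _ < K := by linarith
    -- bootstrap
    have boot : ∀ T' ∈ Icc (0:ℝ) T, (∀ s ∈ Icc (0:ℝ) T', y₁ s ≤ K) →
        ∀ s ∈ Icc (0:ℝ) T', u s ≤ C' * E := by
      intro T' hT' hbd
      have hyp : ∀ s ∈ Icc (0:ℝ) T', u s ≤ C' + ∫ r in (0:ℝ)..s, a r * u r := by
        intro s hs
        have hsT : s ∈ Icc (0:ℝ) T := ⟨hs.1, hs.2.trans hT'.2⟩
        have h1 := hmain s hsT
        have hSle : sSup (y₁ '' Icc 0 s) ≤ K :=
          csSup_le (himg s hsT) (by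
            rintro x ⟨r, hr, rfl⟩
            exact hbd r ⟨hr.1, hr.2.trans hs.2⟩)
        have hy₁le : (∫ t in (0:ℝ)..s, y₁ t) ≤ T * K := by
          have hstep : (∫ t in (0:ℝ)..s, y₁ t) ≤ ∫ _t in (0:ℝ)..s, K := by
            refine intervalIntegral.integral_mono_on hs.1
              ((hy₁c.mono (Icc_subset_Icc le_rfl hsT.2)).intervalIntegrable_of_Icc hs.1)
              intervalIntegrable_const fun t htt => hbd t ⟨htt.1, htt.2.trans hs.2⟩
          have : (∫ _t in (0:ℝ)..s, K) = s * K := by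
            rw [intervalIntegral.integral_const]; simp
          rw [this] at hstep
          exact hstep.trans (mul_le_mul_of_nonneg_right (hs.2.trans hT'.2) hKpos.le)
        have h2 : B * (sSup (y₁ '' Icc 0 s)) ^ β * ∫ t in (0:ℝ)..s, y₁ t
            ≤ B * K ^ β * (T * K) := by
          refine mul_le_mul (mul_le_mul_of_nonneg_left
            (Real.rpow_le_rpow (hSnn s hsT) hSle hβ.le) hB.le)
            hy₁le (hy₁intmono s hsT) (by positivity)
        have h3 : (∫ t in (0:ℝ)..s, a t * y₁ t) ≤ ∫ t in (0:ℝ)..s, a t * u t := by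
          refine intervalIntegral.integral_mono_on hs.1 (hay₁int s hsT) (hauint s hsT)
            fun t htt => ?_
          have htT : t ∈ Icc (0:ℝ) T := ⟨htt.1, htt.2.trans hsT.2⟩
          exact mul_le_mul_of_nonneg_left (hy₁u t htT) (hann t htT)
        calc u s ≤ A + (∫ t in (0:ℝ)..s, a t * y₁ t)
              + B * (sSup (y₁ '' Icc 0 s)) ^ β * ∫ t in (0:ℝ)..s, y₁ t := h1
          _ ≤ A + (∫ t in (0:ℝ)..s, a t * u t) + B * K ^ β * (T * K) := by linarith
          _ = C' + ∫ t in (0:ℝ)..s, a t * u t := by rw [hC']; ring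
      have hgr := gronwall_integral_form T' hT'.1 u a C' hC'pos.le
        (huc.mono (Icc_subset_Icc le_rfl hT'.2))
        (fun t htt => hunn t ⟨htt.1, htt.2.trans hT'.2⟩)
        (hai.mono_set (by rw [uIcc_of_le hT.le]; exact uIcc_subset_Icc ⟨le_rfl, hT.le⟩ hT'))
        (fun t htt => hann t ⟨htt.1, htt.2.trans hT'.2⟩) hyp
      intro s hs
      have h7 := hgr s hs
      have h8 : (∫ r in (0:ℝ)..s, a r) ≤ ∫ r in (0:ℝ)..T, a r := by
        have hsT : s ∈ Icc (0:ℝ) T := ⟨hs.1, hs.2.trans hT'.2⟩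
        have hi1 : IntervalIntegrable a volume 0 s :=
          hai.mono_set (by rw [uIcc_of_le hT.le]; exact uIcc_subset_Icc ⟨le_rfl, hT.le⟩ hsT)
        have hi2 : IntervalIntegrable a volume s T :=
          hai.mono_set (by rw [uIcc_of_le hT.le]; exact uIcc_subset_Icc hsT ⟨hT.le, le_rfl⟩)
        have hadd : (∫ r in (0:ℝ)..s, a r) + ∫ r in s..T, a r = ∫ r in (0:ℝ)..T, a r :=
          intervalIntegral.integral_add_adjacent_intervals hi1 hi2
        have hpos : 0 ≤ ∫ r in s..T, a r :=
          intervalIntegral.integral_nonneg hsT.2 fun r hr => hann r ⟨hsT.1.trans hr.1, hr.2⟩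
        linarith
      calc u s ≤ C' * Real.exp (∫ r in (0:ℝ)..s, a r) := h7
        _ ≤ C' * E := by
            rw [hE]
            exact mul_le_mul_of_nonneg_left (Real.exp_le_exp.2 h8) hC'pos.le
    -- the set Z and its supremum
    set Z : Set ℝ := {t | t ∈ Icc (0:ℝ) T ∧ ∀ s ∈ Icc (0:ℝ) t, y₁ s ≤ K} with hZ
    have hy₁0 : y₁ 0 ≤ A := by
      have h1 := hmain 0 ⟨le_rfl, hT.le⟩
      simpa using h1
    have hAK : A < K := by
      have h1 : A < δ * A := by nlinarith
      have h2 : δ * A ≤ δ * A * E := by nlinarith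
      linarith
    have h0Z : (0:ℝ) ∈ Z := by
      refine ⟨⟨le_rfl, hT.le⟩, fun s hs => ?_⟩
      have : s = 0 := le_antisymm hs.2 hs.1
      rw [this]
      exact hy₁0.trans hAK.le
    have hZne : Z.Nonempty := ⟨0, h0Z⟩
    have hZbdd : BddAbove Z := ⟨T, fun t ht => ht.1.2⟩
    set τ : ℝ := sSup Z with hτ
    have hτmem : τ ∈ Icc (0:ℝ) T := ⟨le_csSup hZbdd h0Z, csSup_le hZne fun t ht => ht.1.2⟩
    have hτZ : ∀ s ∈ Icc (0:ℝ) τ, y₁ s ≤ K := by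
      have hlt : ∀ s, 0 ≤ s → s < τ → y₁ s ≤ K := by
        intro s hs0 hsτ
        obtain ⟨t, htZ, hst⟩ := exists_lt_of_lt_csSup hZne hsτ
        exact htZ.2 s ⟨hs0, hst.le⟩
      intro s hs
      rcases lt_or_eq_of_le hs.2 with h | h
      · exact hlt s hs.1 h
      · rw [h]
        rcases eq_or_lt_of_le hτmem.1 with h0 | h0
        · rw [← h0]; exact hy₁0.trans hAK.le
        · have hcl : τ ∈ closure (Ico 0 τ) := by
            rw [closure_Ico (ne_of_lt h0)]
            exact ⟨h0.le, le_rfl⟩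
          have hne : (𝓝[Ico (0:ℝ) τ] τ).NeBot := mem_closure_iff_nhdsWithin_neBot.1 hcl
          have htend : Tendsto y₁ (𝓝[Ico (0:ℝ) τ] τ) (𝓝 (y₁ τ)) := by
            have hsub : Ico (0:ℝ) τ ⊆ Icc 0 T := fun r hr =>
              ⟨hr.1, hr.2.le.trans hτmem.2⟩
            exact (hy₁c τ hτmem).mono hsub
          refine le_of_tendsto htend ?_
          refine eventually_nhdsWithin_of_forall fun r hr => hlt r hr.1 hr.2
    have hτT : τ = T := by
      by_contra hne
      have hτltT : τ < T := lt_of_le_of_ne hτmem.2 hne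
      have hubτ := boot τ hτmem hτZ
      have hy₁τK : y₁ τ < K :=
        lt_of_le_of_lt ((hy₁u τ hτmem).trans (hubτ τ ⟨hτmem.1, le_rfl⟩)) hC'E
      have hev : ∀ᶠ s in 𝓝[Icc (0:ℝ) T] τ, y₁ s < K :=
        (hy₁c τ hτmem).eventually_lt_const hy₁τK
      rw [Filter.eventually_iff, Metric.mem_nhdsWithin_iff] at hev
      obtain ⟨ε, hεpos, hε⟩ := hev
      set t' : ℝ := min T (τ + ε / 2) with ht'
      have ht'mem : t' ∈ Icc (0:ℝ) T :=
        ⟨le_min hT.le (by linarith [hτmem.1]), min_le_left _ _⟩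
      have hτt' : τ < t' := lt_min hτltT (by linarith)
      have ht'Z : t' ∈ Z := by
        refine ⟨ht'mem, fun s hs => ?_⟩
        rcases le_or_gt s τ with h | h
        · exact hτZ s ⟨hs.1, h⟩
        · have hsT : s ∈ Icc (0:ℝ) T := ⟨hs.1, hs.2.trans ht'mem.2⟩
          have hd : s ∈ Metric.ball τ ε := by
            rw [Metric.mem_ball, Real.dist_eq, abs_of_pos (by linarith)]
            have : s ≤ τ + ε / 2 := hs.2.trans (min_le_right _ _)
            linarith
          exact (hε ⟨hd, hsT⟩).le
      have := le_csSup hZbdd ht'Z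
      linarith
    intro T' hT'
    have hball : ∀ s ∈ Icc (0:ℝ) T, y₁ s ≤ K := by rw [← hτT]; exact hτZ
    have := boot T ⟨hT.le, le_rfl⟩ hball T' hT'
    calc y₁ T' + ∫ t in (0:ℝ)..T', y₂ t = u T' := rfl
      _ ≤ C' * E := this
      _ ≤ δ * A * E := hC'E.le
end

section
/- Degenerate case of the Adjusted Generalized Gronwall Lemma (A = 0): Let T > 0. Suppose y₁ : [0,T] → ℝ is continuous and nonnegative, y₂ : [0,T] → ℝ is integrable and nonnegative, a : [0,T] → ℝ is integrable and nonnegative, and let B ≥ 0, β > 0 be real numbers such that for all T' ∈ [0,T] one has y₁(T') + ∫₀^{T'} y₂(t) dt ≤ ∫₀^{T'} a(t)·y₁(t) dt + B·(sup_{t∈[0,T']} y₁(t))^β·∫₀^{T'} y₁(t) dt. Then y₁(t) = 0 for all t ∈ [0,T] and ∫₀^T y₂(t) dt = 0. -/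
open MeasureTheory intervalIntegral Set

/-- Gronwall lemma with zero constant term: if a nonnegative continuous function
satisfies `y t ≤ ∫₀ᵗ g s * y s ds` with `g` integrable nonnegative, then `y = 0`. -/
lemma gronwall_zero_aux (T : ℝ) (hT : 0 ≤ T) (y g : ℝ → ℝ)
    (hyc : ContinuousOn y (Icc 0 T))
    (hynn : ∀ t ∈ Icc (0:ℝ) T, 0 ≤ y t)
    (hgi : IntervalIntegrable g volume 0 T)
    (hgnn : ∀ t ∈ Icc (0:ℝ) T, 0 ≤ g t)
    (h : ∀ t ∈ Icc (0:ℝ) T, y t ≤ ∫ s in (0:ℝ)..t, g s * y s) :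
    ∀ t ∈ Icc (0:ℝ) T, y t = 0 := by
  have hgy : IntervalIntegrable (fun s => g s * y s) volume 0 T :=
    hgi.mul_continuousOn (by rwa [uIcc_of_le hT])
  set S : Set ℝ := {t ∈ Icc (0:ℝ) T | ∀ s ∈ Icc (0:ℝ) t, y s = 0} with hSdef
  have h0S : (0:ℝ) ∈ S := by
    refine ⟨⟨le_refl 0, hT⟩, ?_⟩
    intro s hs
    have hs0 : s = 0 := le_antisymm hs.2 hs.1
    subst hs0
    have h1 := h 0 ⟨le_refl 0, hT⟩
    simp only [intervalIntegral.integral_same] at h1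
    exact le_antisymm h1 (hynn 0 ⟨le_refl 0, hT⟩)
  have hbdd : BddAbove S := ⟨T, fun x hx => hx.1.2⟩
  set u := sSup S with hu
  have hu0 : 0 ≤ u := le_csSup hbdd h0S
  have huT : u ≤ T := csSup_le ⟨0, h0S⟩ (fun x hx => hx.1.2)
  have hzero_lt : ∀ s, 0 ≤ s → s < u → y s = 0 := by
    intro s hs0 hsu
    obtain ⟨t, htS, hst⟩ := exists_lt_of_lt_csSup ⟨0, h0S⟩ hsu
    exact htS.2 s ⟨hs0, hst.le⟩
  have hyu : y u = 0 := by
    rcases eq_or_lt_of_le hu0 with h0 | h0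
    · rw [← h0]
      exact h0S.2 0 ⟨le_refl 0, le_refl 0⟩
    · -- continuity from the left
      have hc : ContinuousWithinAt y (Icc 0 T) u := hyc u ⟨hu0, huT⟩
      have hmono : Ioo (0:ℝ) u ⊆ Icc 0 T := fun x hx =>
        ⟨hx.1.le, hx.2.le.trans huT⟩
      have hc' : Filter.Tendsto y (nhdsWithin u (Ioo 0 u)) (nhds (y u)) :=
        hc.tendsto.mono_left (nhdsWithin_mono u hmono)
      have hne : (nhdsWithin u (Ioo 0 u)).NeBot := right_nhdsWithin_Ioo_neBot h0
      have hzero : Filter.Tendsto y (nhdsWithin u (Ioo 0 u)) (nhds 0) := by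
        apply Filter.Tendsto.congr' _ tendsto_const_nhds
        filter_upwards [self_mem_nhdsWithin] with x hx
        exact (hzero_lt x hx.1.le hx.2).symm
      exact (tendsto_nhds_unique hzero hc').symm
  have huS : u ∈ S :=
    ⟨⟨hu0, huT⟩, fun s hs => (lt_or_eq_of_le hs.2).elim (hzero_lt s hs.1)
      (fun heq => heq ▸ hyu)⟩
  rcases eq_or_lt_of_le huT with huT' | huT'
  · intro t ht
    exact huS.2 t ⟨ht.1, huT' ▸ ht.2⟩
  · exfalso
    -- find v > u with ∫ u..v g < 1/2
    have hFcont : ContinuousOn (fun t => ∫ s in u..t, g s) (uIcc 0 T) := by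
      apply continuousOn_primitive_interval'
      · exact hgi
      · rw [uIcc_of_le hT]; exact ⟨hu0, huT⟩
    have hFu : ContinuousWithinAt (fun t => ∫ s in u..t, g s) (uIcc 0 T) u := by
      apply hFcont u
      rw [uIcc_of_le hT]; exact ⟨hu0, huT⟩
    have hevent : ∀ᶠ t in nhdsWithin u (uIcc 0 T),
        (∫ s in u..t, g s) < 1/2 := by
      have h0 : (∫ s in u..u, g s) = 0 := intervalIntegral.integral_same
      exact Filter.Tendsto.eventually_lt_const (by norm_num : (0:ℝ) < 1/2)
        (h0 ▸ hFu.tendsto)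
    have hsubIoo : Ioo u T ⊆ uIcc 0 T := by
      rw [uIcc_of_le hT]
      exact fun x hx => ⟨hu0.trans hx.1.le, hx.2.le⟩
    have hne2 : (nhdsWithin u (Ioo u T)).NeBot := left_nhdsWithin_Ioo_neBot huT'
    have hevent2 : ∀ᶠ t in nhdsWithin u (Ioo u T),
        (∫ s in u..t, g s) < 1/2 ∧ t ∈ Ioo u T := by
      filter_upwards [hevent.filter_mono (nhdsWithin_mono u hsubIoo),
        self_mem_nhdsWithin] with t h1 h2
      exact ⟨h1, h2⟩
    obtain ⟨v, hFv, hv⟩ := hevent2.exists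
    have huv : u < v := hv.1
    have hvT : v ≤ T := hv.2.le
    have hsub : Icc u v ⊆ Icc 0 T := fun x hx => ⟨hu0.trans hx.1, hx.2.trans hvT⟩
    -- maximum of y on [u, v]
    obtain ⟨m, hm, hmax⟩ := isCompact_Icc.exists_isMaxOn (nonempty_Icc.2 huv.le)
      (hyc.mono hsub)
    have hm' : m ∈ Icc 0 T := hsub hm
    have hK0 : 0 ≤ y m := hynn m hm'
    -- integrability on subintervals
    have hgy_um : IntervalIntegrable (fun s => g s * y s) volume u m := by
      apply hgy.mono_set
      rw [uIcc_of_le hm.1, uIcc_of_le hT]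
      exact fun x hx => ⟨hu0.trans hx.1, hx.2.trans hm'.2⟩
    have hgy_0u : IntervalIntegrable (fun s => g s * y s) volume 0 u := by
      apply hgy.mono_set
      rw [uIcc_of_le hu0, uIcc_of_le hT]
      exact fun x hx => ⟨hx.1, hx.2.trans huT⟩
    have hg_um : IntervalIntegrable g volume u m := by
      apply hgi.mono_set
      rw [uIcc_of_le hm.1, uIcc_of_le hT]
      exact fun x hx => ⟨hu0.trans hx.1, hx.2.trans hm'.2⟩
    have hg_mv : IntervalIntegrable g volume m v := by
      apply hgi.mono_set
      rw [uIcc_of_le hm.2, uIcc_of_le hT]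
      exact fun x hx => ⟨hm'.1.trans hx.1, hx.2.trans hvT⟩
    -- y m ≤ ∫_0^m g y = ∫_0^u g y + ∫_u^m g y = ∫_u^m g y
    have hsplit : (∫ s in (0:ℝ)..m, g s * y s)
        = (∫ s in (0:ℝ)..u, g s * y s) + ∫ s in u..m, g s * y s :=
      (intervalIntegral.integral_add_adjacent_intervals hgy_0u hgy_um).symm
    have hzero0u : (∫ s in (0:ℝ)..u, g s * y s) = 0 := by
      rw [show (0:ℝ) = ((0:ℝ) : ℝ) from rfl]
      have : EqOn (fun s => g s * y s) (fun _ => (0:ℝ)) (uIcc 0 u) := by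
        intro x hx
        rw [uIcc_of_le hu0] at hx
        simp [huS.2 x hx]
      rw [intervalIntegral.integral_congr this, intervalIntegral.integral_const]
      simp
    have hmono1 : (∫ s in u..m, g s * y s) ≤ ∫ s in u..m, g s * y m := by
      apply intervalIntegral.integral_mono_on hm.1 hgy_um (hg_um.mul_const _)
      intro x hx
      have hx' : x ∈ Icc 0 T := ⟨hu0.trans hx.1, hx.2.trans hm'.2⟩
      exact mul_le_mul_of_nonneg_left (hmax ⟨hx.1, hx.2.trans hm.2⟩) (hgnn x hx')
    have heq2 : (∫ s in u..m, g s * y m) = (∫ s in u..m, g s) * y m :=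
      intervalIntegral.integral_mul_const _ _
    have hFm : (∫ s in u..m, g s) ≤ ∫ s in u..v, g s := by
      have : (∫ s in u..v, g s) = (∫ s in u..m, g s) + ∫ s in m..v, g s :=
        (intervalIntegral.integral_add_adjacent_intervals hg_um hg_mv).symm
      have hpos : 0 ≤ ∫ s in m..v, g s := by
        apply intervalIntegral.integral_nonneg hm.2
        intro x hx
        exact hgnn x ⟨hm'.1.trans hx.1, hx.2.trans hvT⟩
      linarith
    have hFm0 : 0 ≤ ∫ s in u..m, g s := by
      apply intervalIntegral.integral_nonneg hm.1
      intro x hx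
      exact hgnn x ⟨hu0.trans hx.1, hx.2.trans hm'.2⟩
    have hym : y m ≤ (1/2) * y m := by
      have h1 := h m hm'
      have h2 : (∫ s in u..m, g s) * y m ≤ (1/2) * y m := by
        apply mul_le_mul_of_nonneg_right _ hK0
        exact le_of_lt (lt_of_le_of_lt hFm hFv)
      rw [hsplit, hzero0u, zero_add] at h1
      calc y m ≤ ∫ s in u..m, g s * y s := h1
        _ ≤ ∫ s in u..m, g s * y m := hmono1
        _ = (∫ s in u..m, g s) * y m := heq2
        _ ≤ (1/2) * y m := h2
    have hym0 : y m = 0 := by linarith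
    -- then v ∈ S, contradicting u = sSup S < v
    have hvS : v ∈ S := by
      refine ⟨⟨hu0.trans huv.le, hvT⟩, ?_⟩
      intro s hs
      rcases le_or_gt s u with hsu | hsu
      · exact huS.2 s ⟨hs.1, hsu⟩
      · have hs' : s ∈ Icc u v := ⟨hsu.le, hs.2⟩
        have := hmax hs'
        rw [hym0] at this
        exact le_antisymm this (hynn s (hsub hs'))
    have : v ≤ u := le_csSup hbdd hvS
    linarith

/-- Degenerate case (A = 0) of the Adjusted Generalized Gronwall Lemma. -/
theorem adjusted_generalized_gronwall_degenerate
    (T : ℝ) (hT : 0 < T)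
    (y₁ y₂ a : ℝ → ℝ)
    (hy₁c : ContinuousOn y₁ (Icc 0 T))
    (hy₁nn : ∀ t ∈ Icc (0:ℝ) T, 0 ≤ y₁ t)
    (hy₂i : IntervalIntegrable y₂ volume 0 T)
    (hy₂nn : ∀ t ∈ Icc (0:ℝ) T, 0 ≤ y₂ t)
    (hai : IntervalIntegrable a volume 0 T)
    (hann : ∀ t ∈ Icc (0:ℝ) T, 0 ≤ a t)
    (B β : ℝ) (hB : 0 ≤ B) (hβ : 0 < β)
    (hmain : ∀ T' ∈ Icc (0:ℝ) T,
      y₁ T' + ∫ t in (0:ℝ)..T', y₂ t ≤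
        (∫ t in (0:ℝ)..T', a t * y₁ t)
          + B * (sSup (y₁ '' Icc 0 T')) ^ β * ∫ t in (0:ℝ)..T', y₁ t) :
    (∀ t ∈ Icc (0:ℝ) T, y₁ t = 0) ∧ (∫ t in (0:ℝ)..T, y₂ t) = 0 := by
  have hT0 : (0:ℝ) ≤ T := hT.le
  have h0mem : (0:ℝ) ∈ Icc (0:ℝ) T := ⟨le_refl 0, hT0⟩
  set M := sSup (y₁ '' Icc 0 T) with hM
  have hbddM : BddAbove (y₁ '' Icc 0 T) :=
    (isCompact_Icc.image_of_continuousOn hy₁c).bddAbove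
  have hM0 : 0 ≤ M :=
    le_trans (hy₁nn 0 h0mem) (le_csSup hbddM ⟨0, h0mem, rfl⟩)
  set C := B * M ^ β with hC
  have hC0 : 0 ≤ C := mul_nonneg hB (Real.rpow_nonneg hM0 β)
  set g : ℝ → ℝ := fun t => a t + C with hg
  have hgi : IntervalIntegrable g volume 0 T := hai.add intervalIntegrable_const
  have hgnn : ∀ t ∈ Icc (0:ℝ) T, 0 ≤ g t := fun t ht =>
    add_nonneg (hann t ht) hC0
  -- key inequality
  have hkey : ∀ t ∈ Icc (0:ℝ) T, y₁ t ≤ ∫ s in (0:ℝ)..t, g s * y₁ s := by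
    intro t ht
    have hy₂pos : 0 ≤ ∫ s in (0:ℝ)..t, y₂ s := by
      apply intervalIntegral.integral_nonneg ht.1
      intro x hx
      exact hy₂nn x ⟨hx.1, hx.2.trans ht.2⟩
    have hmain' := hmain t ht
    -- sSup over smaller interval ≤ M
    have hne' : (y₁ '' Icc 0 t).Nonempty :=
      ⟨y₁ 0, mem_image_of_mem _ (⟨le_refl 0, ht.1⟩ : (0:ℝ) ∈ Icc (0:ℝ) t)⟩
    have hsupsub : sSup (y₁ '' Icc 0 t) ≤ M :=
      csSup_le_csSup hbddM hne' (image_mono (Icc_subset_Icc_right ht.2))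
    have hsup0 : 0 ≤ sSup (y₁ '' Icc 0 t) := by
      refine le_trans (hy₁nn 0 h0mem)
        (le_csSup ?_ (mem_image_of_mem _ (⟨le_refl 0, ht.1⟩ : (0:ℝ) ∈ Icc (0:ℝ) t)))
      exact hbddM.mono (image_mono (Icc_subset_Icc_right ht.2))
    have hy₁int : 0 ≤ ∫ s in (0:ℝ)..t, y₁ s := by
      apply intervalIntegral.integral_nonneg ht.1
      intro x hx
      exact hy₁nn x ⟨hx.1, hx.2.trans ht.2⟩
    have hcoef : B * (sSup (y₁ '' Icc 0 t)) ^ β ≤ C := by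
      apply mul_le_mul_of_nonneg_left _ hB
      exact Real.rpow_le_rpow hsup0 hsupsub hβ.le
    have hy₁i_t : IntervalIntegrable y₁ volume 0 t := by
      apply ContinuousOn.intervalIntegrable
      rw [uIcc_of_le ht.1]
      exact hy₁c.mono (Icc_subset_Icc_right ht.2)
    have hay₁ : IntervalIntegrable (fun s => a s * y₁ s) volume 0 t := by
      apply IntervalIntegrable.mul_continuousOn
      · apply hai.mono_set
        rw [uIcc_of_le ht.1, uIcc_of_le hT0]
        exact Icc_subset_Icc_right ht.2
      · rw [uIcc_of_le ht.1]
        exact hy₁c.mono (Icc_subset_Icc_right ht.2)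
    have hsum : (∫ s in (0:ℝ)..t, a s * y₁ s) + C * ∫ s in (0:ℝ)..t, y₁ s
        = ∫ s in (0:ℝ)..t, g s * y₁ s := by
      rw [← intervalIntegral.integral_const_mul]
      rw [← intervalIntegral.integral_add hay₁ (hy₁i_t.const_mul C)]
      apply intervalIntegral.integral_congr
      intro x _
      simp [hg]
      ring
    have step : B * (sSup (y₁ '' Icc 0 t)) ^ β * (∫ s in (0:ℝ)..t, y₁ s)
        ≤ C * ∫ s in (0:ℝ)..t, y₁ s :=
      mul_le_mul_of_nonneg_right hcoef hy₁int
    linarith [hmain', hsum, step, hy₂pos]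
  have hzero : ∀ t ∈ Icc (0:ℝ) T, y₁ t = 0 :=
    gronwall_zero_aux T hT0 y₁ g hy₁c hy₁nn hgi hgnn hkey
  refine ⟨hzero, ?_⟩
  have hy₂pos : 0 ≤ ∫ s in (0:ℝ)..T, y₂ s :=
    intervalIntegral.integral_nonneg hT0 hy₂nn
  have hmainT := hmain T ⟨hT0, le_refl T⟩
  have hzero1 : (∫ s in (0:ℝ)..T, a s * y₁ s) = 0 := by
    have : EqOn (fun s => a s * y₁ s) (fun _ => (0:ℝ)) (uIcc 0 T) := by
      intro x hx
      rw [uIcc_of_le hT0] at hx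
      simp [hzero x hx]
    rw [intervalIntegral.integral_congr this, intervalIntegral.integral_const]
    simp
  have hzero2 : (∫ s in (0:ℝ)..T, y₁ s) = 0 := by
    have : EqOn y₁ (fun _ => (0:ℝ)) (uIcc 0 T) := by
      intro x hx
      rw [uIcc_of_le hT0] at hx
      exact hzero x hx
    rw [intervalIntegral.integral_congr this, intervalIntegral.integral_const]
    simp
  rw [hzero1, hzero2, hzero T ⟨hT0, le_refl T⟩] at hmainT
  simp at hmainT
  linarith
end

section
/- Local-in-time continuation lemma (analytic core of Section 3.2 / Theorem 3.5): Let s < s' be real numbers and set Δ := s' − s. Let y₁ : [s,s'] → ℝ be continuous and nonnegative, let y₂ : [s,s'] → ℝ be integrable and nonnegative, and let A ≥ 0, E ≥ 1, B ≥ 0 be real numbers such that for all t ∈ [s,s'] one has y₁(t) + ∫ₛᵗ y₂(r) dr ≤ A·E·exp(B·∫ₛᵗ y₁(r)² dr). If there exists δ > 1 such that exp(B·Δ·δ²·A²·E²) < δ, then for all t ∈ [s,s'] one has y₁(t) + ∫ₛᵗ y₂(r) dr ≤ δ·A·E. -/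
open MeasureTheory intervalIntegral Set

/-- Local-in-time continuation lemma (analytic core of Section 3.2 / Theorem 3.5). -/
theorem local_in_time_continuation
    (s s' : ℝ) (hss' : s < s')
    (y₁ y₂ : ℝ → ℝ)
    (hy₁c : ContinuousOn y₁ (Icc s s'))
    (hy₁nn : ∀ t ∈ Icc s s', 0 ≤ y₁ t)
    (hy₂i : IntervalIntegrable y₂ volume s s')
    (hy₂nn : ∀ t ∈ Icc s s', 0 ≤ y₂ t)
    (A E B : ℝ) (hA : 0 ≤ A) (hE : 1 ≤ E) (hB : 0 ≤ B)
    (hmain : ∀ t ∈ Icc s s',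
      y₁ t + ∫ r in s..t, y₂ r ≤
        A * E * Real.exp (B * ∫ r in s..t, (y₁ r) ^ 2))
    (δ : ℝ) (hδ : 1 < δ)
    (hcond : Real.exp (B * (s' - s) * δ ^ 2 * A ^ 2 * E ^ 2) < δ) :
    ∀ t ∈ Icc s s', y₁ t + ∫ r in s..t, y₂ r ≤ δ * A * E := by
  by_contra hcon
  push_neg at hcon
  obtain ⟨t₁, ht₁, hFt₁⟩ := hcon
  -- case A = 0
  rcases eq_or_lt_of_le hA with hA0 | hApos
  · have h1 := hmain t₁ ht₁
    have h2 : 0 ≤ ∫ r in s..t₁, y₂ r :=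
      intervalIntegral.integral_nonneg ht₁.1
        (fun u hu => hy₂nn u ⟨hu.1, hu.2.trans ht₁.2⟩)
    have h3 := hy₁nn t₁ ht₁
    rw [← hA0] at h1 hFt₁
    simp at h1 hFt₁
    linarith
  have hE0 : 0 < E := lt_of_lt_of_le one_pos hE
  have hAE : 0 < A * E := mul_pos hApos hE0
  set K : ℝ := δ * A * E with hK
  have hKpos : 0 < K := by positivity
  have hAEK : A * E < K := by nlinarith
  set F : ℝ → ℝ := fun t => y₁ t + ∫ r in s..t, y₂ r with hF
  -- F is continuous on Icc s s'
  have hFc : ContinuousOn F (Icc s s') := by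
    have h1 : ContinuousOn (fun t => ∫ r in s..t, y₂ r) (Icc s s') := by
      have := intervalIntegral.continuousOn_primitive_interval' (μ := volume)
        (b₁ := s) (b₂ := s') (a := s) hy₂i (left_mem_uIcc)
      rwa [uIcc_of_le hss'.le] at this
    exact hy₁c.add h1
  -- the bad set
  set T : Set ℝ := {t ∈ Icc s s' | K ≤ F t} with hT
  have hTne : T.Nonempty := ⟨t₁, ht₁, hFt₁.le⟩
  have hTbdd : BddBelow T := ⟨s, fun x hx => hx.1.1⟩
  have hTclosed : IsClosed T := by
    have : T = Icc s s' ∩ F ⁻¹' (Ici K) := by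
      ext x; simp [hT, and_comm]
    rw [this]
    exact hFc.preimage_isClosed_of_isClosed isClosed_Icc isClosed_Ici
  set t₀ : ℝ := sInf T with ht₀
  have ht₀T : t₀ ∈ T := hTclosed.csInf_mem hTne hTbdd
  have ht₀I : t₀ ∈ Icc s s' := ht₀T.1
  have hKF : K ≤ F t₀ := ht₀T.2
  -- on [s, t₀), F < K
  have hlt : ∀ r ∈ Ico s t₀, F r < K := by
    intro r hr
    by_contra h
    push_neg at h
    have : r ∈ T := ⟨⟨hr.1, hr.2.le.trans ht₀I.2⟩, h⟩
    exact absurd (csInf_le hTbdd this) (not_le.2 hr.2)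
  -- hence y₁ ≤ K on [s, t₀)
  have hy₁K : ∀ r ∈ Ico s t₀, y₁ r ≤ K := by
    intro r hr
    have h2 : 0 ≤ ∫ u in s..r, y₂ u :=
      intervalIntegral.integral_nonneg hr.1
        (fun u hu => hy₂nn u ⟨hu.1, hu.2.trans (hr.2.le.trans ht₀I.2)⟩)
    have := hlt r hr
    simp only [hF] at this
    linarith
  -- bound the integral of y₁²
  have hy₁sqi : IntervalIntegrable (fun r => (y₁ r) ^ 2) volume s t₀ := by
    apply ContinuousOn.intervalIntegrable
    rw [uIcc_of_le ht₀I.1]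
    exact (hy₁c.mono (Icc_subset_Icc le_rfl ht₀I.2)).pow 2
  have hint : (∫ r in s..t₀, (y₁ r) ^ 2) ≤ (s' - s) * K ^ 2 := by
    have h1 : (∫ r in s..t₀, (y₁ r) ^ 2) ≤ ∫ r in s..t₀, K ^ 2 := by
      apply intervalIntegral.integral_mono_ae_restrict ht₀I.1 hy₁sqi
        intervalIntegrable_const
      have hmem : ∀ᵐ r ∂(volume.restrict (Icc s t₀)), r ∈ Icc s t₀ :=
        ae_restrict_mem measurableSet_Icc
      have hne : ∀ᵐ r ∂(volume.restrict (Icc s t₀)), r ≠ t₀ :=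
        ae_restrict_of_ae (by
        have : (volume : Measure ℝ) {t₀} = 0 := measure_singleton t₀
        rw [MeasureTheory.ae_iff]
        simp only [not_not]
        simp [this])
      filter_upwards [hmem, hne] with r hrI hrne
      have hr : r ∈ Ico s t₀ := ⟨hrI.1, lt_of_le_of_ne hrI.2 hrne⟩
      have h0 : 0 ≤ y₁ r := hy₁nn r ⟨hr.1, hr.2.le.trans ht₀I.2⟩
      have h1 : y₁ r ≤ K := hy₁K r hr
      nlinarith
    rw [intervalIntegral.integral_const, smul_eq_mul] at h1
    have : (t₀ - s) * K ^ 2 ≤ (s' - s) * K ^ 2 := by nlinarith [ht₀I.2, sq_nonneg K]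
    linarith
  -- contradiction
  have hchain : F t₀ ≤ A * E * Real.exp (B * ((s' - s) * K ^ 2)) := by
    have h1 := hmain t₀ ht₀I
    have h2 : Real.exp (B * ∫ r in s..t₀, (y₁ r) ^ 2) ≤
        Real.exp (B * ((s' - s) * K ^ 2)) := by
      apply Real.exp_le_exp.2
      exact mul_le_mul_of_nonneg_left hint hB
    calc F t₀ ≤ A * E * Real.exp (B * ∫ r in s..t₀, (y₁ r) ^ 2) := h1
      _ ≤ A * E * Real.exp (B * ((s' - s) * K ^ 2)) := by
          exact mul_le_mul_of_nonneg_left h2 hAE.le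
  have hexp : Real.exp (B * ((s' - s) * K ^ 2)) < δ := by
    have : B * ((s' - s) * K ^ 2) = B * (s' - s) * δ ^ 2 * A ^ 2 * E ^ 2 := by
      rw [hK]; ring
    rwa [this]
  have : F t₀ < K := by
    calc F t₀ ≤ A * E * Real.exp (B * ((s' - s) * K ^ 2)) := hchain
      _ < A * E * δ := by exact mul_lt_mul_of_pos_left hexp hAE
      _ = K := by rw [hK]; ring
  linarith
end

section
/- Global stability via iterated local-in-time continuation (abstract form of Theorem 3.5): Let 0 = t₀ < t₁ < ⋯ < t_N = T be a partition of [0,T] with step sizes Δₙ := t_{n+1} − tₙ. Let y₁ : [0,T] → ℝ be continuous and nonnegative, let y₂ : [0,T] → ℝ be integrable and nonnegative, and let B ≥ 0. For each n ∈ {0,…,N−1} let rₙ ≥ 0, Eₙ ≥ 1 and δₙ > 1 be real numbers, define recursively A₀ := y₁(0) + r₀, Ψₙ := δₙ·Aₙ·Eₙ, and A_{n+1} := Ψₙ + r_{n+1}, and assume: (i) for all t ∈ [tₙ, t_{n+1}], y₁(t) + ∫_{tₙ}^{t} y₂(r) dr ≤ (y₁(tₙ) + rₙ)·Eₙ·exp(B·∫_{tₙ}^{t}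 y₁(r)² dr); and (ii) exp(B·Δₙ·δₙ²·Aₙ²·Eₙ²) < δₙ. Then for all t ∈ [0,T] one has y₁(t) + ∫₀^{t} y₂(r) dr ≤ Ψ_{N−1}. -/
open MeasureTheory intervalIntegral Set

/-- Continuous induction lemma: if whenever `g ≤ K` on `[a,s]` we get the strict
inequality `g s < K`, and `g a ≤ K`, then `g ≤ K` on all of `[a,b]`. -/
lemma cont_induction_aux {a b K : ℝ} {g : ℝ → ℝ} (hab : a ≤ b)
    (hg : ContinuousOn g (Icc a b)) (hga : g a ≤ K)
    (H : ∀ s ∈ Icc a b, (∀ u ∈ Icc a s, g u ≤ K) → g s < K) :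
    ∀ s ∈ Icc a b, g s ≤ K := by
  set S : Set ℝ := {s | s ∈ Icc a b ∧ ∀ u ∈ Icc a s, g u ≤ K} with hS
  have haS : a ∈ S := by
    refine ⟨⟨le_rfl, hab⟩, ?_⟩
    intro u hu
    have : u = a := le_antisymm hu.2 hu.1
    rwa [this]
  have hSne : S.Nonempty := ⟨a, haS⟩
  have hbdd : BddAbove S := ⟨b, fun s hs => hs.1.2⟩
  set c := sSup S with hc
  have hac : a ≤ c := le_csSup hbdd haS
  have hcb : c ≤ b := csSup_le hSne (fun s hs => hs.1.2)
  have hcIcc : c ∈ Icc a b := ⟨hac, hcb⟩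
  -- closed set of points where g ≤ K
  have hCclosed : IsClosed (Icc a b ∩ g ⁻¹' (Iic K)) :=
    hg.preimage_isClosed_of_isClosed isClosed_Icc isClosed_Iic
  have hSsub : S ⊆ Icc a b ∩ g ⁻¹' (Iic K) := by
    intro s hs
    exact ⟨hs.1, hs.2 s ⟨hs.1.1, le_rfl⟩⟩
  have hcC : c ∈ Icc a b ∩ g ⁻¹' (Iic K) := by
    have h1 : c ∈ closure S := csSup_mem_closure hSne hbdd
    exact hCclosed.closure_subset (closure_mono hSsub h1)
  have hcS : ∀ u ∈ Icc a c, g u ≤ K := by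
    intro u hu
    rcases lt_or_eq_of_le hu.2 with h | h
    · obtain ⟨s, hsS, hus⟩ := exists_lt_of_lt_csSup hSne h
      exact hsS.2 u ⟨hu.1, le_of_lt hus⟩
    · rw [h]; exact hcC.2
  have hgc : g c < K := H c hcIcc hcS
  have hceq : c = b := by
    by_contra hne
    have hcb' : c < b := lt_of_le_of_ne hcb hne
    have hcw : ContinuousWithinAt g (Icc a b) c := hg c hcIcc
    have hev : g ⁻¹' (Iio K) ∈ nhdsWithin c (Icc a b) := hcw (Iio_mem_nhds hgc)
    rw [Metric.mem_nhdsWithin_iff] at hev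
    obtain ⟨ε, hε, hball⟩ := hev
    set d := min (c + ε / 2) b with hd
    have hcd : c < d := by
      apply lt_min (by linarith) hcb'
    have hdb : d ≤ b := min_le_right _ _
    have hdS : d ∈ S := by
      refine ⟨⟨le_trans hac (le_of_lt hcd), hdb⟩, ?_⟩
      intro u hu
      rcases le_or_gt u c with h | h
      · exact hcS u ⟨hu.1, h⟩
      · have hub : u ∈ Icc a b := ⟨hu.1, le_trans hu.2 hdb⟩
        have hudist : u ∈ Metric.ball c ε := by
          rw [Metric.mem_ball, Real.dist_eq, abs_of_pos (by linarith)]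
          have : u ≤ c + ε / 2 := le_trans hu.2 (min_le_left _ _)
          linarith
        exact le_of_lt (hball ⟨hudist, hub⟩)
    have : d ≤ c := le_csSup hbdd hdS
    linarith
  intro s hs
  exact hcS s ⟨hs.1, hceq ▸ hs.2⟩

set_option maxHeartbeats 1600000 in
/-- Global stability via iterated local-in-time continuation
(abstract form of Theorem 3.5). -/
theorem global_stability_iterated_continuation
    (T : ℝ) (N : ℕ) (hN : 0 < N)
    (t : ℕ → ℝ) (ht0 : t 0 = 0) (htN : t N = T)
    (htmono : ∀ n < N, t n < t (n + 1))
    (y₁ y₂ : ℝ → ℝ)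
    (hy₁c : ContinuousOn y₁ (Icc 0 T))
    (hy₁nn : ∀ s ∈ Icc (0:ℝ) T, 0 ≤ y₁ s)
    (hy₂i : IntervalIntegrable y₂ volume 0 T)
    (hy₂nn : ∀ s ∈ Icc (0:ℝ) T, 0 ≤ y₂ s)
    (B : ℝ) (hB : 0 ≤ B)
    (r E δ : ℕ → ℝ)
    (hr : ∀ n < N, 0 ≤ r n) (hE : ∀ n < N, 1 ≤ E n) (hδ : ∀ n < N, 1 < δ n)
    (A Ψ : ℕ → ℝ)
    (hA0 : A 0 = y₁ 0 + r 0)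
    (hΨ : ∀ n < N, Ψ n = δ n * A n * E n)
    (hArec : ∀ n, n + 1 < N → A (n + 1) = Ψ n + r (n + 1))
    (hlocal : ∀ n < N, ∀ s ∈ Icc (t n) (t (n + 1)),
      y₁ s + ∫ u in (t n)..s, y₂ u ≤
        (y₁ (t n) + r n) * E n * Real.exp (B * ∫ u in (t n)..s, (y₁ u) ^ 2))
    (hroot : ∀ n < N,
      Real.exp (B * (t (n + 1) - t n) * (δ n) ^ 2 * (A n) ^ 2 * (E n) ^ 2) < δ n) :
    ∀ s ∈ Icc (0:ℝ) T, y₁ s + ∫ u in (0:ℝ)..s, y₂ u ≤ Ψ (N - 1) := by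
  -- monotonicity of the partition
  have tmono : ∀ n, n ≤ N → ∀ m, m ≤ n → t m ≤ t n := by
    intro n
    induction n with
    | zero =>
      intro _ m hm
      have : m = 0 := Nat.le_zero.mp hm
      rw [this]
    | succ n ih =>
      intro hn m hm
      rcases Nat.lt_succ_iff_lt_or_eq.mp (Nat.lt_succ_of_le hm) with h | h
      · exact le_trans (ih (by omega) m (by omega))
          (le_of_lt (htmono n (by omega)))
      · rw [h]
  have hT0 : (0:ℝ) ≤ T := by
    have := tmono N le_rfl 0 (Nat.zero_le _)
    rwa [ht0, htN] at this
  have trange : ∀ n, n ≤ N → t n ∈ Icc (0:ℝ) T := by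
    intro n hn
    constructor
    · have := tmono n hn 0 (Nat.zero_le _); rwa [ht0] at this
    · have := tmono N le_rfl n hn; rwa [htN] at this
  -- integrability of y₂ on subintervals
  have hy₂sub : ∀ a b : ℝ, a ∈ Icc (0:ℝ) T → b ∈ Icc (0:ℝ) T →
      IntervalIntegrable y₂ volume a b := by
    intro a b ha hb
    apply hy₂i.mono_set
    rw [uIcc_of_le hT0]
    exact uIcc_subset_Icc ha hb
  -- nonnegativity of integrals of y₂
  have hInn : ∀ a b : ℝ, 0 ≤ a → a ≤ b → b ≤ T → 0 ≤ ∫ u in a..b, y₂ u := by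
    intro a b ha hab hb
    apply intervalIntegral.integral_nonneg hab
    intro u hu
    exact hy₂nn u ⟨le_trans ha hu.1, le_trans hu.2 hb⟩
  -- the continuous function g
  set g : ℝ → ℝ := fun s => y₁ s + ∫ u in (0:ℝ)..s, y₂ u with hgdef
  have hgc : ContinuousOn g (Icc 0 T) := by
    apply hy₁c.add
    have := intervalIntegral.continuousOn_primitive_interval' hy₂i
      (a := 0) (by rw [uIcc_of_le hT0]; exact ⟨le_rfl, hT0⟩)
    rwa [uIcc_of_le hT0] at this
  -- pointwise: y₁ ≤ g on [0,T]
  have hy₁leg : ∀ s ∈ Icc (0:ℝ) T, y₁ s ≤ g s := by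
    intro s hs
    have := hInn 0 s le_rfl hs.1 hs.2
    simp only [hgdef]
    linarith
  -- the key step lemma
  have hstep : ∀ n, n < N → 0 ≤ A n → g (t n) + r n ≤ A n →
      ∀ s ∈ Icc (t n) (t (n + 1)), g s ≤ Ψ n := by
    intro n hn hAn hstart
    have hΨn : Ψ n = δ n * A n * E n := hΨ n hn
    have hab : t n ≤ t (n + 1) := le_of_lt (htmono n hn)
    have haT : t n ∈ Icc (0:ℝ) T := trange n (le_of_lt hn)
    have hbT : t (n + 1) ∈ Icc (0:ℝ) T := trange (n + 1) hn
    have hsubT : Icc (t n) (t (n + 1)) ⊆ Icc (0:ℝ) T :=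
      Icc_subset_Icc haT.1 hbT.2
    have hrn : 0 ≤ r n := hr n hn
    have hEn : 1 ≤ E n := hE n hn
    have hδn : 1 < δ n := hδ n hn
    have hIann : 0 ≤ ∫ u in (0:ℝ)..(t n), y₂ u := hInn 0 (t n) le_rfl haT.1 haT.2
    have hδE : 1 ≤ δ n * E n := by nlinarith
    have hAΨ : A n ≤ Ψ n := by
      rw [hΨn]
      have := mul_le_mul_of_nonneg_left hδE hAn
      nlinarith
    have hΨnn : 0 ≤ Ψ n := le_trans hAn hAΨ
    rcases eq_or_lt_of_le hAn with hA0' | hApos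
    · -- degenerate case A n = 0
      intro s hs
      have hy1a : 0 ≤ y₁ (t n) := hy₁nn (t n) haT
      have hga' : y₁ (t n) + (∫ u in (0:ℝ)..(t n), y₂ u) + r n ≤ 0 := by
        rw [← hA0'] at hstart
        simp only [hgdef] at hstart; linarith
      have h1 : y₁ (t n) + r n ≤ 0 := by linarith
      have hloc := hlocal n hn s hs
      have hX : (0:ℝ) < Real.exp (B * ∫ u in (t n)..s, (y₁ u) ^ 2) := Real.exp_pos _
      have hrhs : (y₁ (t n) + r n) * E n * Real.exp (B * ∫ u in (t n)..s, (y₁ u) ^ 2) ≤ 0 := by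
        have hyr : y₁ (t n) + r n = 0 := le_antisymm h1 (by linarith)
        rw [hyr]; ring_nf; simp
      have hsplit : (∫ u in (0:ℝ)..s, y₂ u) =
          (∫ u in (0:ℝ)..(t n), y₂ u) + ∫ u in (t n)..s, y₂ u :=
        (intervalIntegral.integral_add_adjacent_intervals
          (hy₂sub 0 (t n) ⟨le_rfl, hT0⟩ haT)
          (hy₂sub (t n) s haT (hsubT hs))).symm
      have hIa0 : (∫ u in (0:ℝ)..(t n), y₂ u) = 0 := le_antisymm (by linarith) hIann
      simp only [hgdef]
      rw [hsplit, hIa0]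
      linarith
    · -- main case A n > 0
      apply cont_induction_aux hab (hgc.mono hsubT)
      · simp only [hgdef]
        simp only [hgdef] at hstart
        linarith
      · intro s hs hind
        have hsT : s ∈ Icc (0:ℝ) T := hsubT hs
        have hloc := hlocal n hn s hs
        -- bound the integral of y₁²
        have hy1sqint : IntervalIntegrable (fun u => (y₁ u) ^ 2) volume (t n) s := by
          apply ContinuousOn.intervalIntegrable
          apply (hy₁c.mono ?_).pow
          rw [uIcc_of_le hs.1]
          exact Icc_subset_Icc haT.1 hsT.2
        have hintbd : (∫ u in (t n)..s, (y₁ u) ^ 2) ≤ (s - t n) * (Ψ n) ^ 2 := by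
          have := intervalIntegral.integral_mono_on hs.1 hy1sqint
            (_root_.intervalIntegrable_const (c := (Ψ n) ^ 2)) ?_
          · rwa [intervalIntegral.integral_const, smul_eq_mul] at this
          · intro u hu
            have huT : u ∈ Icc (0:ℝ) T := ⟨le_trans haT.1 hu.1, le_trans hu.2 hsT.2⟩
            have h1 : y₁ u ≤ Ψ n := le_trans (hy₁leg u huT) (hind u hu)
            have h2 : 0 ≤ y₁ u := hy₁nn u huT
            nlinarith
        have hintnn : 0 ≤ ∫ u in (t n)..s, (y₁ u) ^ 2 := by
          apply intervalIntegral.integral_nonneg hs.1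
          intro u _; positivity
        set X := Real.exp (B * ∫ u in (t n)..s, (y₁ u) ^ 2) with hXdef
        have hX1 : 1 ≤ X := Real.one_le_exp (by positivity)
        have hXδ : X < δ n := by
          have h1 : B * ∫ u in (t n)..s, (y₁ u) ^ 2 ≤
              B * (t (n + 1) - t n) * (δ n) ^ 2 * (A n) ^ 2 * (E n) ^ 2 := by
            have h2 : (s - t n) * (Ψ n) ^ 2 ≤ (t (n + 1) - t n) * (Ψ n) ^ 2 := by
              nlinarith [hs.2, sq_nonneg (Ψ n)]
            have h3 : B * ∫ u in (t n)..s, (y₁ u) ^ 2 ≤ B * ((t (n+1) - t n) * (Ψ n) ^ 2) :=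
              mul_le_mul_of_nonneg_left (le_trans hintbd h2) hB
            calc B * ∫ u in (t n)..s, (y₁ u) ^ 2
                ≤ B * ((t (n+1) - t n) * (Ψ n) ^ 2) := h3
              _ = B * (t (n + 1) - t n) * (δ n) ^ 2 * (A n) ^ 2 * (E n) ^ 2 := by
                  rw [hΨn]; ring
          exact lt_of_le_of_lt (Real.exp_le_exp.2 h1) (hroot n hn)
        -- combine
        have hsplit : (∫ u in (0:ℝ)..s, y₂ u) =
            (∫ u in (0:ℝ)..(t n), y₂ u) + ∫ u in (t n)..s, y₂ u :=
          (intervalIntegral.integral_add_adjacent_intervals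
            (hy₂sub 0 (t n) ⟨le_rfl, hT0⟩ haT)
            (hy₂sub (t n) s haT hsT)).symm
        set I := ∫ u in (0:ℝ)..(t n), y₂ u with hIdef
        set J := ∫ u in (t n)..s, y₂ u with hJdef
        have hy1a : 0 ≤ y₁ (t n) := hy₁nn (t n) haT
        have hEX : 1 ≤ E n * X :=
          le_trans hEn (le_mul_of_one_le_right (by linarith) hX1)
        have h3 : y₁ s + J ≤ (y₁ (t n) + r n) * (E n * X) := by
          rw [← mul_assoc]; exact hloc
        have h4 : (y₁ (t n) + r n) * (E n * X) + I ≤ (y₁ (t n) + r n + I) * (E n * X) := by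
          have hkey : 0 ≤ I * (E n * X - 1) :=
            mul_nonneg hIann (sub_nonneg.mpr hEX)
          nlinarith [hkey]
        have h5 : (y₁ (t n) + r n + I) * (E n * X) ≤ A n * (E n * X) := by
          apply mul_le_mul_of_nonneg_right ?_ (by linarith)
          simp only [hgdef] at hstart
          linarith
        have h6 : A n * (E n * X) < A n * (E n * δ n) := by
          apply mul_lt_mul_of_pos_left ?_ hApos
          exact mul_lt_mul_of_pos_left hXδ (by linarith)
        have hΨeq : A n * (E n * δ n) = Ψ n := by rw [hΨn]; ring
        simp only [hgdef]
        rw [hsplit]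
        linarith
  -- induction: the hypotheses of hstep hold at each n
  have key : ∀ n, n < N → 0 ≤ A n ∧ g (t n) + r n ≤ A n := by
    intro n
    induction n with
    | zero =>
      intro _
      have h0T : (0:ℝ) ∈ Icc (0:ℝ) T := ⟨le_rfl, hT0⟩
      have hy10 : 0 ≤ y₁ 0 := hy₁nn 0 h0T
      have hg0 : g (t 0) = y₁ 0 + 0 := by
        simp only [hgdef, ht0, intervalIntegral.integral_same]
      constructor
      · rw [hA0]; linarith [hr 0 hN]
      · rw [hg0, hA0]; linarith
    | succ n ih =>
      intro hn1
      have hn : n < N := by omega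
      obtain ⟨h1, h2⟩ := ih hn
      have hb := hstep n hn h1 h2 (t (n + 1)) ⟨le_of_lt (htmono n hn), le_rfl⟩
      have hΨnn : 0 ≤ Ψ n := by
        rw [hΨ n hn]
        have hδE : 1 ≤ δ n * E n := by nlinarith [hδ n hn, hE n hn]
        nlinarith [mul_le_mul_of_nonneg_left hδE h1]
      have hA1 : A (n + 1) = Ψ n + r (n + 1) := hArec n hn1
      constructor
      · rw [hA1]; linarith [hr (n + 1) hn1]
      · rw [hA1]; linarith [hr (n + 1) hn1]
  -- Ψ is monotone up to N - 1
  have Ψmono : ∀ n, n + 1 < N → Ψ n ≤ Ψ (n + 1) := by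
    intro n hn1
    have hn : n < N := by omega
    have hA1 : A (n + 1) = Ψ n + r (n + 1) := hArec n hn1
    have hA1nn : 0 ≤ A (n + 1) := (key (n + 1) hn1).1
    have h1 : A (n + 1) ≤ Ψ (n + 1) := by
      rw [hΨ (n + 1) hn1]
      have hδE : 1 ≤ δ (n + 1) * E (n + 1) := by
        nlinarith [hδ (n + 1) hn1, hE (n + 1) hn1]
      nlinarith [mul_le_mul_of_nonneg_left hδE hA1nn]
    have h2 : Ψ n ≤ A (n + 1) := by rw [hA1]; linarith [hr (n + 1) hn1]
    linarith
  have ΨleLast : ∀ n, n < N → Ψ n ≤ Ψ (N - 1) := by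
    have hgen : ∀ k n, n + k = N - 1 → n < N → Ψ n ≤ Ψ (N - 1) := by
      intro k
      induction k with
      | zero => intro n hk _; rw [← hk]; simp
      | succ k ihk =>
        intro n hk hn
        have hn1 : n + 1 < N := by omega
        exact le_trans (Ψmono n hn1) (ihk (n + 1) (by omega) hn1)
    intro n hn
    exact hgen (N - 1 - n) n (by omega) hn
  -- covering lemma
  have hcov : ∀ k, k ≤ N → ∀ s : ℝ, 0 ≤ s → s ≤ t k →
      ∃ n, n < N ∧ s ∈ Icc (t n) (t (n + 1)) := by
    intro k
    induction k with
    | zero =>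
      intro _ s hs0 hsk
      rw [ht0] at hsk
      have hseq : s = 0 := le_antisymm hsk hs0
      refine ⟨0, hN, ?_⟩
      rw [hseq, ht0]
      exact ⟨le_rfl, by rw [← ht0]; exact le_of_lt (htmono 0 hN)⟩
    | succ k ihk =>
      intro hk1 s hs0 hsk
      rcases le_or_gt s (t k) with h | h
      · exact ihk (by omega) s hs0 h
      · exact ⟨k, by omega, le_of_lt h, hsk⟩
  -- conclusion
  intro s hs
  obtain ⟨n, hn, hsn⟩ := hcov N le_rfl s hs.1 (by rw [htN]; exact hs.2)
  obtain ⟨h1, h2⟩ := key n hn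
  have hgs := hstep n hn h1 h2 s hsn
  simp only [hgdef] at hgs
  exact le_trans hgs (ΨleLast n hn)
end
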